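/- For every natural number n ≥ 0, with T_10 = {12̄, 1̄2, 21̄}, one has b_n(T_10) = Σ_{j=0}^{n} j!·(n−j)!, equivalently b_n(T_10) = n!·Σ_{j=0}^{n} C(n,j)^{-1}, the factorial times the sum of the reciprocals of the binomial coefficients. -/

import Mathlib

/-- A signed permutation of length `n`: a permutation of `Fin n` (the absolute
values) together with a sign (bar) for each position. -/
abbrev SignedPerm (n : ℕ) := Equiv.Perm (Fin n) × (Fin n → Bool)

/-- `α` contains the signed pattern `τ`. -/
def SPContains {n k : ℕ} (α : SignedPerm n) (τ : SignedPerm k) : Prop :=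
  ∃ f : Fin k → Fin n, StrictMono f ∧
    (∀ p q : Fin k, τ.1 p < τ.1 q ↔ α.1 (f p) < α.1 (f q)) ∧
    ∀ j : Fin k, α.2 (f j) = τ.2 j

/-- `α` avoids every pattern in `T`. -/
def AvoidsAll {n k : ℕ} (T : Set (SignedPerm k)) (α : SignedPerm n) : Prop :=
  ∀ τ ∈ T, ¬ SPContains α τ

/-- `bn n T` is the number of signed permutations in `B_n` avoiding all patterns of `T`. -/
noncomputable def bn (n : ℕ) (T : Set (SignedPerm 2)) : ℕ :=
  Nat.card {α : SignedPerm n // AvoidsAll T α}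

def p12   : SignedPerm 2 := (Equiv.refl (Fin 2), ![false, false])
def p21   : SignedPerm 2 := (Equiv.swap 0 1,     ![false, false])
def p12b  : SignedPerm 2 := (Equiv.refl (Fin 2), ![false, true])
def p1b2  : SignedPerm 2 := (Equiv.refl (Fin 2), ![true, false])
def p21b  : SignedPerm 2 := (Equiv.swap 0 1,     ![false, true])
def p2b1  : SignedPerm 2 := (Equiv.swap 0 1,     ![true, false])
def p1b2b : SignedPerm 2 := (Equiv.refl (Fin 2), ![true, true])
def p2b1b : SignedPerm 2 := (Equiv.swap 0 1,     ![true, true])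

-- ===================== auxiliary =====================

lemma card_filter_lt (n m : ℕ) (h : m ≤ n) :
    (Finset.univ.filter (fun k : Fin n => k.val < m)).card = m := by
  have heq : Finset.univ.filter (fun k : Fin n => k.val < m)
      = (Finset.range m).attachFin
        (fun a ha => lt_of_lt_of_le (Finset.mem_range.mp ha) h) := by
    ext a; simp [Finset.mem_attachFin]
  rw [heq, Finset.card_attachFin, Finset.card_range]

lemma contains_refl_iff {n : ℕ} (σ : Equiv.Perm (Fin n)) (b : Fin n → Bool) (t : Fin 2 → Bool) :
    SPContains (σ, b) (Equiv.refl (Fin 2), t) ↔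
      ∃ i k : Fin n, i < k ∧ σ i < σ k ∧ b i = t 0 ∧ b k = t 1 := by
  constructor
  · rintro ⟨f, hmono, hord, hbar⟩
    exact ⟨f 0, f 1, hmono (show (0:Fin 2) < 1 by decide),
      (hord 0 1).mp (show (0:Fin 2) < 1 by decide), hbar 0, hbar 1⟩
  · rintro ⟨i, k, hik, hlt, hbi, hbk⟩
    have hlt' := Fin.lt_def.mp hlt
    refine ⟨![i, k], ?_, ?_, ?_⟩
    · intro p q hpq
      have hp := p.isLt; have hq := q.isLt
      have hpq' := Fin.lt_def.mp hpq
      have hp0 : p = 0 := by apply Fin.ext; simp; omega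
      have hq1 : q = 1 := by apply Fin.ext; simp; omega
      subst hp0; subst hq1
      simpa using hik
    · simp only [Fin.forall_fin_two, Matrix.cons_val_zero, Matrix.cons_val_one,
        Matrix.head_cons, Equiv.refl_apply, Fin.lt_def, Fin.val_zero, Fin.val_one]
      refine ⟨⟨by omega, by omega⟩, ⟨by omega, by omega⟩⟩
    · intro j; fin_cases j <;> simpa

lemma contains_swap_iff {n : ℕ} (σ : Equiv.Perm (Fin n)) (b : Fin n → Bool) (t : Fin 2 → Bool) :
    SPContains (σ, b) (Equiv.swap 0 1, t) ↔
      ∃ i k : Fin n, i < k ∧ σ k < σ i ∧ b i = t 0 ∧ b k = t 1 := by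
  constructor
  · rintro ⟨f, hmono, hord, hbar⟩
    exact ⟨f 0, f 1, hmono (show (0:Fin 2) < 1 by decide),
      (hord 1 0).mp (show (Equiv.swap (0:Fin 2) 1) 1 < (Equiv.swap (0:Fin 2) 1) 0 by decide),
      hbar 0, hbar 1⟩
  · rintro ⟨i, k, hik, hlt, hbi, hbk⟩
    have hlt' := Fin.lt_def.mp hlt
    refine ⟨![i, k], ?_, ?_, ?_⟩
    · intro p q hpq
      have hp := p.isLt; have hq := q.isLt
      have hpq' := Fin.lt_def.mp hpq
      have hp0 : p = 0 := by apply Fin.ext; simp; omega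
      have hq1 : q = 1 := by apply Fin.ext; simp; omega
      subst hp0; subst hq1
      simpa using hik
    · simp only [Fin.forall_fin_two, Matrix.cons_val_zero, Matrix.cons_val_one,
        Matrix.head_cons, Equiv.swap_apply_left, Equiv.swap_apply_right, Fin.lt_def,
        Fin.val_zero, Fin.val_one]
      refine ⟨⟨by omega, by omega⟩, ⟨by omega, by omega⟩⟩
    · intro j; fin_cases j <;> simpa

lemma avoid_iff {n : ℕ} (σ : Equiv.Perm (Fin n)) (b : Fin n → Bool) :
    AvoidsAll {p12b, p1b2, p21b} (σ, b) ↔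
      ((∀ i k : Fin n, i < k → b k = true → b i = true) ∧
       (∀ i k : Fin n, i < k → b i = true → b k = false → σ k < σ i)) := by
  have h12b : SPContains (σ, b) p12b ↔
      ∃ i k : Fin n, i < k ∧ σ i < σ k ∧ b i = false ∧ b k = true := by
    rw [show p12b = (Equiv.refl (Fin 2), ![false, true]) from rfl, contains_refl_iff]; simp
  have h1b2 : SPContains (σ, b) p1b2 ↔
      ∃ i k : Fin n, i < k ∧ σ i < σ k ∧ b i = true ∧ b k = false := by
    rw [show p1b2 = (Equiv.refl (Fin 2), ![true, false]) from rfl, contains_refl_iff]; simp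
  have h21b : SPContains (σ, b) p21b ↔
      ∃ i k : Fin n, i < k ∧ σ k < σ i ∧ b i = false ∧ b k = true := by
    rw [show p21b = (Equiv.swap 0 1, ![false, true]) from rfl, contains_swap_iff]; simp
  constructor
  · intro hav
    have n12b := hav p12b (by simp)
    have n1b2 := hav p1b2 (by simp)
    have n21b := hav p21b (by simp)
    rw [h12b] at n12b; rw [h1b2] at n1b2; rw [h21b] at n21b
    constructor
    · intro i k hik hbk
      by_contra hbi
      have hbi' : b i = false := by simpa using hbi
      have hne : σ i ≠ σ k := fun h => (Fin.ne_of_lt hik) (σ.injective h)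
      rcases lt_or_gt_of_ne hne with h | h
      · exact n12b ⟨i, k, hik, h, hbi', hbk⟩
      · exact n21b ⟨i, k, hik, h, hbi', hbk⟩
    · intro i k hik hbi hbk
      have hne : σ i ≠ σ k := fun h => (Fin.ne_of_lt hik) (σ.injective h)
      rcases lt_or_gt_of_ne hne with h | h
      · exact absurd ⟨i, k, hik, h, hbi, hbk⟩ n1b2
      · exact h
  · rintro ⟨hdc, hord⟩ τ hτ
    rcases hτ with h | h | h <;> subst h
    · rw [h12b]; rintro ⟨i, k, hik, hlt, hbi, hbk⟩
      rw [hdc i k hik hbk] at hbi; exact Bool.noConfusion hbi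
    · rw [h1b2]; rintro ⟨i, k, hik, hlt, hbi, hbk⟩
      exact lt_asymm hlt (hord i k hik hbi hbk)
    · rw [h21b]; rintro ⟨i, k, hik, hlt, hbi, hbk⟩
      rw [hdc i k hik hbk] at hbi; exact Bool.noConfusion hbi

-- the block permutation
def mkPerm (n j : ℕ) (hj : j ≤ n) (π : Equiv.Perm (Fin j)) (ρ : Equiv.Perm (Fin (n - j))) :
    Equiv.Perm (Fin n) :=
  ((((finCongr (by omega : n = j + (n - j))).trans finSumFinEquiv.symm).trans
    (Equiv.sumCongr π ρ)).trans ((Equiv.sumComm _ _).trans finSumFinEquiv)).trans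
    (finCongr (by omega : (n - j) + j = n))

lemma mkPerm_val_lt (n j : ℕ) (hj : j ≤ n) (π : Equiv.Perm (Fin j))
    (ρ : Equiv.Perm (Fin (n - j))) (i : Fin n) (h : i.val < j) :
    (mkPerm n j hj π ρ i).val = n - j + (π ⟨i.val, h⟩).val := by
  have key : Fin.cast (by omega : n = j + (n - j)) i = Fin.castAdd (n - j) ⟨i.val, h⟩ :=
    Fin.ext rfl
  rw [mkPerm]
  simp only [Equiv.trans_apply, finCongr_apply]
  rw [key, finSumFinEquiv_symm_apply_castAdd]
  simp

lemma mkPerm_val_ge (n j : ℕ) (hj : j ≤ n) (π : Equiv.Perm (Fin j))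
    (ρ : Equiv.Perm (Fin (n - j))) (i : Fin n) (h : j ≤ i.val) :
    (mkPerm n j hj π ρ i).val = (ρ ⟨i.val - j, by have := i.isLt; omega⟩).val := by
  have key : Fin.cast (by omega : n = j + (n - j)) i
      = Fin.natAdd j ⟨i.val - j, by have := i.isLt; omega⟩ := by
    apply Fin.ext; simp; omega
  rw [mkPerm]
  simp only [Equiv.trans_apply, finCongr_apply]
  rw [key, finSumFinEquiv_symm_apply_natAdd]
  simp


lemma good_bounds {n j : ℕ} (hj : j ≤ n) (σ : Equiv.Perm (Fin n))
    (hQ : ∀ i k : Fin n, i.val < j → j ≤ k.val → σ k < σ i) :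
    (∀ i : Fin n, i.val < j → n - j ≤ (σ i).val) ∧
    (∀ k : Fin n, j ≤ k.val → (σ k).val < n - j) := by
  have hcard_ge : (Finset.univ.filter (fun k : Fin n => j ≤ k.val)).card = n - j := by
    have h1 := Finset.card_filter_add_card_filter_not
      (s := (Finset.univ : Finset (Fin n))) (fun k : Fin n => k.val < j)
    have h2 : (Finset.univ.filter (fun k : Fin n => ¬ k.val < j))
        = Finset.univ.filter (fun k : Fin n => j ≤ k.val) := by
      apply Finset.filter_congr; intro k _; simp [not_lt]
    rw [card_filter_lt n j hj, h2, Finset.card_univ, Fintype.card_fin] at h1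
    omega
  constructor
  · intro i hi
    have hsub : (Finset.univ.filter (fun k : Fin n => j ≤ k.val)).image σ
        ⊆ Finset.univ.filter (fun v : Fin n => v.val < (σ i).val) := by
      intro v hv
      rcases Finset.mem_image.mp hv with ⟨k, hk, rfl⟩
      have := hQ i k hi (Finset.mem_filter.mp hk).2
      simpa using this
    have hle := Finset.card_le_card hsub
    rw [Finset.card_image_of_injective _ σ.injective, hcard_ge,
      card_filter_lt n _ (le_of_lt (σ i).isLt)] at hle
    exact hle
  · intro k hk
    have hcard_gt : (Finset.univ.filter (fun v : Fin n => (σ k).val < v.val)).card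
        = n - ((σ k).val + 1) := by
      have h1 := Finset.card_filter_add_card_filter_not
        (s := (Finset.univ : Finset (Fin n))) (fun v : Fin n => v.val < (σ k).val + 1)
      have h2 : (Finset.univ.filter (fun v : Fin n => ¬ v.val < (σ k).val + 1))
          = Finset.univ.filter (fun v : Fin n => (σ k).val < v.val) := by
        apply Finset.filter_congr; intro v _; simp [not_lt, Nat.succ_le_iff]
      rw [card_filter_lt n _ (σ k).isLt, h2, Finset.card_univ, Fintype.card_fin] at h1
      omega
    have hsub : (Finset.univ.filter (fun i : Fin n => i.val < j)).image σ
        ⊆ Finset.univ.filter (fun v : Fin n => (σ k).val < v.val) := by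
      intro v hv
      rcases Finset.mem_image.mp hv with ⟨i, hi, rfl⟩
      have := hQ i k (Finset.mem_filter.mp hi).2 hk
      simpa using this
    have hle := Finset.card_le_card hsub
    rw [Finset.card_image_of_injective _ σ.injective, hcard_gt, card_filter_lt n j hj] at hle
    have := (σ k).isLt
    omega

lemma mkPerm_surj {n j : ℕ} (hjn : j ≤ n) (σ : Equiv.Perm (Fin n))
    (hA : ∀ i : Fin n, i.val < j → n - j ≤ (σ i).val)
    (hB : ∀ k : Fin n, j ≤ k.val → (σ k).val < n - j) :
    ∃ (π : Equiv.Perm (Fin j)) (ρ : Equiv.Perm (Fin (n - j))), mkPerm n j hjn π ρ = σ := by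
  set f1 : Fin j → Fin j := fun p =>
    ⟨(σ ⟨p.val, lt_of_lt_of_le p.isLt hjn⟩).val - (n - j), by
      have := (σ ⟨p.val, lt_of_lt_of_le p.isLt hjn⟩).isLt
      have := p.isLt; omega⟩ with hf1
  have inj1 : Function.Injective f1 := by
    intro p q hpq
    apply Fin.ext
    have h1 : n - j ≤ (σ ⟨p.val, lt_of_lt_of_le p.isLt hjn⟩).val := hA _ p.isLt
    have h2 : n - j ≤ (σ ⟨q.val, lt_of_lt_of_le q.isLt hjn⟩).val := hA _ q.isLt
    have hval : (σ ⟨p.val, lt_of_lt_of_le p.isLt hjn⟩).val - (n - j)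
        = (σ ⟨q.val, lt_of_lt_of_le q.isLt hjn⟩).val - (n - j) := congrArg Fin.val hpq
    have hσ : σ ⟨p.val, lt_of_lt_of_le p.isLt hjn⟩ = σ ⟨q.val, lt_of_lt_of_le q.isLt hjn⟩ :=
      Fin.ext (by omega)
    have hfin := σ.injective hσ
    simpa using hfin
  set f2 : Fin (n - j) → Fin (n - j) := fun p =>
    ⟨(σ ⟨j + p.val, by have := p.isLt; omega⟩).val,
      hB ⟨j + p.val, by have := p.isLt; omega⟩ (Nat.le_add_right _ _)⟩ with hf2
  have inj2 : Function.Injective f2 := by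
    intro p q hpq
    apply Fin.ext
    have hval := congrArg Fin.val hpq
    simp only [hf2] at hval
    have hσ : σ ⟨j + p.val, by have := p.isLt; omega⟩
        = σ ⟨j + q.val, by have := q.isLt; omega⟩ := Fin.ext hval
    have hfin := congrArg Fin.val (σ.injective hσ)
    simp only at hfin
    omega
  refine ⟨Equiv.ofBijective f1 (Finite.injective_iff_bijective.mp inj1),
    Equiv.ofBijective f2 (Finite.injective_iff_bijective.mp inj2), ?_⟩
  apply Equiv.ext; intro i
  apply Fin.ext
  by_cases h : i.val < j
  · rw [mkPerm_val_lt n j hjn _ _ i h]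
    simp only [Equiv.ofBijective_apply, hf1]
    have := hA i h
    have := (σ i).isLt
    have hmkeq : σ ⟨((⟨i.val, h⟩ : Fin j) : ℕ), lt_of_lt_of_le (⟨i.val, h⟩ : Fin j).isLt hjn⟩
        = σ i := congrArg σ (Fin.ext rfl)
    simp only [hmkeq]
    omega
  · have h' : j ≤ i.val := by omega
    rw [mkPerm_val_ge n j hjn _ _ i h']
    simp only [Equiv.ofBijective_apply, hf2]
    have hmkeq : σ ⟨j + ((⟨i.val - j, by have := i.isLt; omega⟩ : Fin (n - j)) : ℕ), by
        have := i.isLt; simp; omega⟩ = σ i := congrArg σ (Fin.ext (by simp; omega))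
    simp only [hmkeq]


theorem stmt12 (n : ℕ) :
    bn n {p12b, p1b2, p21b} = ∑ j ∈ Finset.range (n + 1), Nat.factorial j * Nat.factorial (n - j) ∧
    (bn n {p12b, p1b2, p21b} : ℚ) =
      (Nat.factorial n : ℚ) * ∑ j ∈ Finset.range (n + 1), ((Nat.choose n j : ℚ))⁻¹ := by
  have hmain : bn n {p12b, p1b2, p21b}
      = ∑ j ∈ Finset.range (n + 1), Nat.factorial j * Nat.factorial (n - j) := by
    set T : Set (SignedPerm 2) := {p12b, p1b2, p21b} with hT
    -- the bijection
    have hjle : ∀ j : Fin (n + 1), j.val ≤ n := fun j => Nat.lt_succ_iff.mp j.isLt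
    set G : (Σ j : Fin (n + 1), Equiv.Perm (Fin j.val) × Equiv.Perm (Fin (n - j.val)))
        → {α : SignedPerm n // AvoidsAll T α} :=
      fun x => ⟨(mkPerm n x.1.val (hjle x.1) x.2.1 x.2.2,
        fun i => decide (i.val < x.1.val)), by
        rw [hT, avoid_iff]
        constructor
        · intro i k hik hbk
          have hik' := Fin.lt_def.mp hik
          have hk := of_decide_eq_true hbk
          exact decide_eq_true (by omega)
        · intro i k hik hbi hbk
          have hi := of_decide_eq_true hbi
          have hk : ¬ k.val < x.1.val := of_decide_eq_false hbk
          rw [Fin.lt_def, mkPerm_val_lt n x.1.val (hjle x.1) x.2.1 x.2.2 i hi,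
            mkPerm_val_ge n x.1.val (hjle x.1) x.2.1 x.2.2 k (by omega)]
          have := (x.2.2 ⟨k.val - x.1.val, by have := k.isLt; omega⟩).isLt
          omega⟩ with hG
    have hbij : Function.Bijective G := by
      constructor
      · rintro ⟨j, π, ρ⟩ ⟨j', π', ρ'⟩ hxy
        simp only [hG, Subtype.mk.injEq, Prod.mk.injEq] at hxy
        obtain ⟨hperm, hbool⟩ := hxy
        have hjj : j = j' := by
          by_contra hne
          have hne' : j.val ≠ j'.val := fun h => hne (Fin.ext h)
          rcases Nat.lt_or_ge j.val j'.val with h | h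
          · have hjn : j.val < n := lt_of_lt_of_le h (hjle j')
            have := congrFun hbool ⟨j.val, hjn⟩
            simp at this; omega
          · have h' : j'.val < j.val := by omega
            have hjn : j'.val < n := lt_of_lt_of_le h' (hjle j)
            have := congrFun hbool ⟨j'.val, hjn⟩
            simp at this; omega
        subst hjj
        have hπ : π = π' := by
          apply Equiv.ext; intro p
          have hp : (p : ℕ) < j.val := p.isLt
          have hpn : (p : ℕ) < n := lt_of_lt_of_le hp (hjle j)
          have := congrArg (fun e : Equiv.Perm (Fin n) => (e ⟨p.val, hpn⟩).val) hperm
          rw [mkPerm_val_lt n j.val (hjle j) π ρ ⟨p.val, hpn⟩ hp,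
            mkPerm_val_lt n j.val (hjle j) π' ρ' ⟨p.val, hpn⟩ hp] at this
          have hmk : (⟨(⟨p.val, hpn⟩ : Fin n).val, hp⟩ : Fin j.val) = p := Fin.ext rfl
          rw [hmk] at this
          exact Fin.ext (by omega)
        have hρ : ρ = ρ' := by
          apply Equiv.ext; intro p
          have hp : (p : ℕ) < n - j.val := p.isLt
          have hpn : j.val + (p : ℕ) < n := by omega
          have hge : j.val ≤ ((⟨j.val + p.val, hpn⟩ : Fin n) : ℕ) := by simp
          have := congrArg (fun e : Equiv.Perm (Fin n) => (e ⟨j.val + p.val, hpn⟩).val) hperm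
          rw [mkPerm_val_ge n j.val (hjle j) π ρ ⟨j.val + p.val, hpn⟩ hge,
            mkPerm_val_ge n j.val (hjle j) π' ρ' ⟨j.val + p.val, hpn⟩ hge] at this
          have hmk : (⟨((⟨j.val + p.val, hpn⟩ : Fin n) : ℕ) - j.val, by simp⟩ : Fin (n - j.val)) = p :=
            Fin.ext (by simp)
          rw [hmk] at this
          exact Fin.ext (by omega)
        rw [hπ, hρ]
      · rintro ⟨⟨σ, b⟩, hav⟩
        rw [hT, avoid_iff] at hav
        obtain ⟨hdc, hord⟩ := hav
        set j : ℕ := (Finset.univ.filter (fun i : Fin n => b i = true)).card with hjdef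
        have hjn : j ≤ n := by
          have := Finset.card_filter_le (Finset.univ : Finset (Fin n))
            (fun i : Fin n => b i = true)
          simpa using this
        have hb : ∀ i : Fin n, b i = true ↔ i.val < j := by
          intro i
          constructor
          · intro hbi
            have hsub : Finset.univ.filter (fun k : Fin n => k.val < i.val + 1)
                ⊆ Finset.univ.filter (fun k : Fin n => b k = true) := by
              intro k hk
              have hk' : k.val ≤ i.val := by
                have := (Finset.mem_filter.mp hk).2; omega
              rcases eq_or_lt_of_le hk' with h | h
              · simp [Fin.ext h, hbi]
              · simp [hdc k i (Fin.lt_def.mpr h) hbi]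
            have := Finset.card_le_card hsub
            rw [card_filter_lt n (i.val + 1) i.isLt] at this
            omega
          · intro hij
            by_contra hbi
            have hbi' : b i = false := by simpa using hbi
            have hsub : Finset.univ.filter (fun k : Fin n => b k = true)
                ⊆ Finset.univ.filter (fun k : Fin n => k.val < i.val) := by
              intro k hk
              have hbk := (Finset.mem_filter.mp hk).2
              simp only [Finset.mem_filter, Finset.mem_univ, true_and]
              by_contra hge
              have hge' : i.val ≤ k.val := by omega
              rcases eq_or_lt_of_le hge' with h | h
              · rw [Fin.ext h] at hbi'; rw [hbi'] at hbk; exact Bool.noConfusion hbk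
              · have := hdc i k (Fin.lt_def.mpr h) hbk
                rw [hbi'] at this; exact Bool.noConfusion this
            have := Finset.card_le_card hsub
            rw [card_filter_lt n i.val (le_of_lt i.isLt)] at this
            omega
        have hQ : ∀ i k : Fin n, i.val < j → j ≤ k.val → σ k < σ i := by
          intro i k hi hk
          have hbk : b k = false := by
            have := (hb k).mp
            cases hbk : b k
            · rfl
            · exact absurd (this hbk) (by omega)
          exact hord i k (Fin.lt_def.mpr (by omega)) ((hb i).mpr hi) hbk
        obtain ⟨hA, hB⟩ := good_bounds hjn σ hQ
        obtain ⟨π, ρ, hσeq⟩ := mkPerm_surj hjn σ hA hB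
        refine ⟨⟨⟨j, by omega⟩, π, ρ⟩, ?_⟩
        apply Subtype.ext
        simp only [hG]
        refine Prod.ext ?_ ?_
        · exact hσeq
        · funext i
          show decide (i.val < j) = b i
          by_cases h : i.val < j
          · have h1 : b i = true := (hb i).mpr h
            rw [h1]
            exact decide_eq_true h
          · have h1 : b i = false := by
              have : b i ≠ true := fun hc => h ((hb i).mp hc)
              simpa using this
            rw [h1]
            exact decide_eq_false h
    have hcard := Nat.card_eq_of_bijective G hbij
    rw [bn, ← hcard, Nat.card_eq_fintype_card, Fintype.card_sigma]
    simp only [Fintype.card_prod, Fintype.card_perm, Fintype.card_fin]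
    rw [Fin.sum_univ_eq_sum_range (fun j => Nat.factorial j * Nat.factorial (n - j)) (n + 1)]
  refine ⟨hmain, ?_⟩
  rw [hmain]
  push_cast
  rw [Finset.mul_sum]
  apply Finset.sum_congr rfl
  intro j hj
  have h1 : j ≤ n := Nat.lt_succ_iff.mp (Finset.mem_range.mp hj)
  have h2 : ((Nat.choose n j : ℕ) : ℚ) ≠ 0 :=
    Nat.cast_ne_zero.mpr (Nat.choose_pos h1).ne'
  have h3 : ((Nat.choose n j : ℕ) : ℚ) * (Nat.factorial j : ℕ) * ((Nat.factorial (n - j) : ℕ))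
      = ((Nat.factorial n : ℕ) : ℚ) := by
    exact_mod_cast congrArg (fun m : ℕ => (m : ℚ)) (Nat.choose_mul_factorial_mul_factorial h1)
  field_simp
  linear_combination h3
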